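/- arXiv:0901.0242 — 8 statements merged into one kernel-verified Lean document; each statement's English description precedes it below -/
import Mathlib

section
/- Let P = (Z,<) be a causal set such that I(x) is infinite for some x ∈ Z. Then P has a linear extension that does not have the order-type of ℕ. -/
/-- If `P` is a causal set containing an element `x` incomparable with infinitely many
others, then `P` has a linear extension that does not have the order-type of `ℕ`:
some element has infinitely many elements strictly below it in the linear extension. -/
theorem stmt2 (Z : Type*) [PartialOrder Z] [Countable Z] [Infinite Z]
    (hD : ∀ z : Z, {y : Z | y < z}.Finite)
    (x : Z) (hx : {y : Z | ¬ x ≤ y ∧ ¬ y ≤ x}.Infinite) :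
    ∃ le' : Z → Z → Prop, IsLinearOrder Z le' ∧ (∀ a b : Z, a ≤ b → le' a b) ∧
      ∃ z : Z, {y : Z | le' y z ∧ y ≠ z}.Infinite := by
  set r : Z → Z → Prop := fun a b => a ≤ b ∨ (¬ x ≤ a ∧ x ≤ b) with hr
  have hpo : IsPartialOrder Z r := by
    refine { refl := fun a => Or.inl le_rfl, trans := ?_, antisymm := ?_ }
    · intro a b c hab hbc
      rcases hab with hab | ⟨ha, hab⟩
      · rcases hbc with hbc | ⟨hb, hbc⟩
        · exact Or.inl (hab.trans hbc)
        · exact Or.inr ⟨fun h => hb (h.trans hab), hbc⟩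
      · rcases hbc with hbc | ⟨hb, hbc⟩
        · exact Or.inr ⟨ha, hab.trans hbc⟩
        · exact absurd hab hb
    · intro a b hab hba
      rcases hab with hab | ⟨ha, hab⟩
      · rcases hba with hba | ⟨hb, hba⟩
        · exact le_antisymm hab hba
        · exact absurd (hba.trans hab) hb
      · rcases hba with hba | ⟨hb, hba⟩
        · exact absurd (hab.trans hba) ha
        · exact absurd hab hb
  obtain ⟨s, hs, hrs⟩ := @extend_partialOrder Z r hpo
  refine ⟨s, hs, fun a b hab => hrs _ _ (Or.inl hab), x, ?_⟩
  apply hx.mono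
  intro y hy
  exact ⟨hrs _ _ (Or.inr ⟨hy.1, le_rfl⟩), fun h => hy.1 (h ▸ le_rfl)⟩
end

section
/- Let P be a finite poset and let x be a maximal element of P with |P| = n. For 1 ≤ i ≤ n let L_i denote the set of linear extensions of P in which x appears in position i. Then |L_i| ≤ |L_{i+1}| for all 1 ≤ i < n; equivalently, the probability r_i(x) that x is in position i in a uniformly random linear extension of P is non-decreasing in i. -/
/-- A linear extension of a finite poset `Z` with `n` elements, viewed as a bijection
from positions `Fin n` to `Z` whose inverse is order-preserving. -/
def IsLinExtEquiv {Z : Type*} [PartialOrder Z] {n : ℕ} (l : Fin n ≃ Z) : Prop :=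
  ∀ i j : Fin n, l i < l j → i < j

/-- If `x` is a maximal element of a finite poset with `n` elements, then the number of
linear extensions with `x` in position `i` is at most the number with `x` in
position `i + 1`. -/
theorem stmt3 (Z : Type*) [Fintype Z] [PartialOrder Z] (n : ℕ) (hn : Fintype.card Z = n)
    (x : Z) (hx : ∀ y : Z, ¬ x < y) (i : ℕ) (hi : i + 1 < n) :
    Nat.card {l : Fin n ≃ Z // IsLinExtEquiv l ∧ l ⟨i, by omega⟩ = x} ≤
      Nat.card {l : Fin n ≃ Z // IsLinExtEquiv l ∧ l ⟨i + 1, hi⟩ = x} := by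
  classical
  set a : Fin n := ⟨i, by omega⟩ with ha
  set b : Fin n := ⟨i + 1, hi⟩ with hb
  have hab : a ≠ b := by simp [ha, hb, Fin.ext_iff]
  refine Nat.card_le_card_of_injective
    (fun l => ⟨(Equiv.swap a b).trans l.1, ?_, ?_⟩) ?_
  · -- linear extension property
    intro p q hpq
    simp only [Equiv.trans_apply] at hpq
    have hlt : Equiv.swap a b p < Equiv.swap a b q := l.2.1 _ _ hpq
    by_cases hpa : p = a
    · by_cases hqb : q = b
      · subst hpa hqb
        simp [Fin.lt_def, ha, hb]
      · subst hpa
        by_cases hqa : q = a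
        · subst hqa; exact absurd hlt (lt_irrefl _)
        · rw [Equiv.swap_apply_left, Equiv.swap_apply_of_ne_of_ne hqa hqb] at hlt
          have : (b : ℕ) < q := hlt
          simp only [Fin.lt_def, Fin.ext_iff, ha, hb] at *
          omega
    · by_cases hpb : p = b
      · subst hpb
        by_cases hqa : q = a
        · -- bad case: x < l b, contradicting maximality
          subst hqa
          rw [Equiv.swap_apply_right, Equiv.swap_apply_left] at hpq
          rw [l.2.2] at hpq
          exact absurd hpq (hx _)
        · by_cases hqb : q = b
          · subst hqb; exact absurd hlt (lt_irrefl _)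
          · rw [Equiv.swap_apply_right, Equiv.swap_apply_of_ne_of_ne hqa hqb] at hlt
            have : (a : ℕ) < q := hlt
            simp only [Fin.lt_def, Fin.ext_iff, ha, hb] at *
            omega
      · rw [Equiv.swap_apply_of_ne_of_ne hpa hpb] at hlt
        by_cases hqa : q = a
        · subst hqa
          rw [Equiv.swap_apply_left] at hlt
          have : (p : ℕ) < b := hlt
          simp only [Fin.lt_def, Fin.ext_iff, ha, hb] at *
          omega
        · by_cases hqb : q = b
          · subst hqb
            rw [Equiv.swap_apply_right] at hlt
            have : (p : ℕ) < a := hlt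
            simp only [Fin.lt_def, Fin.ext_iff, ha, hb] at *
            omega
          · rwa [Equiv.swap_apply_of_ne_of_ne hqa hqb] at hlt
  · -- position of x
    show ((Equiv.swap a b).trans l.1) b = x
    rw [Equiv.trans_apply, Equiv.swap_apply_right]
    exact l.2.2
  · intro l₁ l₂ h
    have := congrArg Subtype.val h
    simp only at this
    apply Subtype.ext
    have : (Equiv.swap a b).trans l₁.1 = (Equiv.swap a b).trans l₂.1 := this
    ext p
    have := congrFun (congrArg (fun e => e.toFun) this) ((Equiv.swap a b) p)
    simpa using this
end

section
/- Let P be a finite poset with a maximal element x and |P| = n. Then for any 1 ≤ j ≤ n, the probability that x is in position j of a uniformly random linear extension of P is at most 1/(n - j + 1). -/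
def sfun {n : ℕ} (j k : Fin n) (i : Fin n) : Fin n :=
  if (i : ℕ) = k then j
  else if h : (j : ℕ) ≤ i ∧ (i : ℕ) < k then ⟨i + 1, by have := k.isLt; omega⟩
  else i

def gfun {n : ℕ} (j k : Fin n) (i : Fin n) : Fin n :=
  if (i : ℕ) = j then k
  else if h : (j : ℕ) < i ∧ (i : ℕ) ≤ k then ⟨i - 1, by have := i.isLt; omega⟩
  else i

lemma sfun_val {n : ℕ} (j k i : Fin n) :
    (sfun j k i : ℕ) = if (i : ℕ) = k then (j : ℕ)
      else if (j : ℕ) ≤ i ∧ (i : ℕ) < k then (i : ℕ) + 1 else (i : ℕ) := by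
  unfold sfun; split_ifs <;> rfl

lemma gfun_val {n : ℕ} (j k i : Fin n) :
    (gfun j k i : ℕ) = if (i : ℕ) = j then (k : ℕ)
      else if (j : ℕ) < i ∧ (i : ℕ) ≤ k then (i : ℕ) - 1 else (i : ℕ) := by
  unfold gfun; split_ifs <;> rfl

/-- Cycle permutation of `Fin n` sending `k ↦ j`, `i ↦ i+1` for `j ≤ i < k`, identity else. -/
def shiftPerm {n : ℕ} (j k : Fin n) (hjk : (j : ℕ) ≤ k) : Fin n ≃ Fin n where
  toFun := sfun j k
  invFun := gfun j k
  left_inv i := by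
    apply Fin.ext
    rw [gfun_val, sfun_val]
    have hj := j.isLt
    split_ifs <;> omega
  right_inv i := by
    apply Fin.ext
    rw [sfun_val, gfun_val]
    have hk := k.isLt
    split_ifs <;> omega

lemma shiftPerm_apply_self {n : ℕ} (j k : Fin n) (hjk : (j : ℕ) ≤ k) :
    shiftPerm j k hjk k = j := by
  apply Fin.ext
  show (sfun j k k : ℕ) = j
  rw [sfun_val]; simp

lemma shiftPerm_cases {n : ℕ} (j k : Fin n) (hjk : (j : ℕ) ≤ k) (i : Fin n)
    (hi : (i : ℕ) ≠ k) :
    (shiftPerm j k hjk i : ℕ) = i ∨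
      ((j : ℕ) ≤ i ∧ (i : ℕ) < k ∧ (shiftPerm j k hjk i : ℕ) = i + 1) := by
  have hv := sfun_val j k i
  split_ifs at hv with h1 h2
  · exact absurd h1 hi
  · exact Or.inr ⟨h2.1, h2.2, hv⟩
  · exact Or.inl hv

/-- Card of the upper set in `Fin n`. -/
lemma card_ge_subtype {n : ℕ} (j : Fin n) :
    Nat.card {k : Fin n // j ≤ k} = n - (j : ℕ) := by
  have e : {k : Fin n // j ≤ k} ≃ Fin (n - (j : ℕ)) :=
    { toFun := fun k => ⟨(k : Fin n) - j, by
        have h1 := k.2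
        rw [Fin.le_def] at h1
        have h2 := (k.1).isLt
        simp [Fin.sub_val_of_le k.2]
        omega⟩
      invFun := fun m => ⟨⟨m + j, by have := m.isLt; omega⟩, by
        rw [Fin.le_def]; simp⟩
      left_inv := fun k => by
        apply Subtype.ext; apply Fin.ext
        have h1 := k.2; rw [Fin.le_def] at h1
        simp [Fin.sub_val_of_le k.2]
        omega
      right_inv := fun m => by
        apply Fin.ext
        have h1 : j ≤ (⟨m + j, by have := m.isLt; omega⟩ : Fin n) := by
          rw [Fin.le_def]; simp
        simp [Fin.sub_val_of_le h1] }
  rw [Nat.card_congr e, Nat.card_eq_fintype_card, Fintype.card_fin]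

/-- If `x` is a maximal element of a finite poset with `n` elements, then the probability
that `x` is in position `j` (0-indexed; there are `n - j` positions from `j` on) of a
uniformly random linear extension is at most `1/(n - j)`, stated multiplicatively:
`#{extensions with x at j} * (n - j) ≤ #{all extensions}`. -/
theorem stmt4 (Z : Type*) [Fintype Z] [PartialOrder Z] (n : ℕ) (hn : Fintype.card Z = n)
    (x : Z) (hx : ∀ y : Z, ¬ x < y) (j : Fin n) :
    Nat.card {l : Fin n ≃ Z // IsLinExtEquiv l ∧ l j = x} * (n - (j : ℕ)) ≤
      Nat.card {l : Fin n ≃ Z // IsLinExtEquiv l} := by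
  classical
  set A := {l : Fin n ≃ Z // IsLinExtEquiv l ∧ l j = x}
  have key : ∀ (k : Fin n) (hjk : (j : ℕ) ≤ k), ∀ (l : Fin n ≃ Z), IsLinExtEquiv l →
      l j = x → IsLinExtEquiv ((shiftPerm j k hjk).trans l) := by
    intro k hjk l hl hlj a b hab
    simp only [Equiv.trans_apply] at hab
    have hcab := hl _ _ hab
    rw [Fin.lt_def] at hcab ⊢
    by_cases hak : (a : ℕ) = k
    · exfalso
      have ha' : a = k := Fin.ext hak
      rw [ha', shiftPerm_apply_self, hlj] at hab
      exact hx _ hab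
    by_cases hbk : (b : ℕ) = k
    · have hb' : b = k := Fin.ext hbk
      rw [hb', shiftPerm_apply_self] at hcab
      rcases shiftPerm_cases j k hjk a hak with h1 | ⟨h1, h2, h3⟩ <;> omega
    · have hne : (a : ℕ) ≠ b := by
        intro hc
        have : a = b := Fin.ext hc
        subst this
        exact lt_irrefl _ hab
      rcases shiftPerm_cases j k hjk a hak with h1 | ⟨_, _, h1⟩ <;>
        rcases shiftPerm_cases j k hjk b hbk with h2 | ⟨_, _, h2⟩ <;> omega
  let F : {k : Fin n // j ≤ k} × A → {l : Fin n ≃ Z // IsLinExtEquiv l} :=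
    fun p => ⟨(shiftPerm j p.1.1 (Fin.le_def.mp p.1.2)).trans p.2.1,
      key p.1.1 (Fin.le_def.mp p.1.2) p.2.1 p.2.2.1 p.2.2.2⟩
  have hF : Function.Injective F := by
    rintro ⟨⟨k1, hk1⟩, ⟨l1, hl1, hlj1⟩⟩ ⟨⟨k2, hk2⟩, ⟨l2, hl2, hlj2⟩⟩ h
    simp only [F, Subtype.mk.injEq] at h
    have hx1 : ((shiftPerm j k1 (Fin.le_def.mp hk1)).trans l1) k1 = x := by
      simp [Equiv.trans_apply, shiftPerm_apply_self, hlj1]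
    have hx2 : ((shiftPerm j k2 (Fin.le_def.mp hk2)).trans l2) k2 = x := by
      simp [Equiv.trans_apply, shiftPerm_apply_self, hlj2]
    have hkk : k1 = k2 := by
      have : ((shiftPerm j k1 (Fin.le_def.mp hk1)).trans l1) k1
           = ((shiftPerm j k1 (Fin.le_def.mp hk1)).trans l1) k2 := by
        rw [hx1, h, hx2]
      exact ((shiftPerm j k1 (Fin.le_def.mp hk1)).trans l1).injective this
    subst hkk
    have hll : l1 = l2 := by
      have h2 : (shiftPerm j k1 (Fin.le_def.mp hk1)).symm.trans
            ((shiftPerm j k1 (Fin.le_def.mp hk1)).trans l1)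
          = (shiftPerm j k1 (Fin.le_def.mp hk1)).symm.trans
            ((shiftPerm j k1 (Fin.le_def.mp hk1)).trans l2) := by rw [h]
      simpa [← Equiv.trans_assoc] using h2
    subst hll
    rfl
  have hcard := Nat.card_le_card_of_injective F hF
  rw [Nat.card_prod, card_ge_subtype] at hcard
  rwa [Nat.mul_comm] at hcard
end

section
/- Let P_n be the ladder poset on {a_1,...,a_n} with a_i < a_j iff j > i+1. The number of linear extensions of P_n in which a_1 is the bottom element equals F_{n-1}, and hence the proportion of linear extensions of P_n with bottom element a_1 is F_{n-1}/F_n, which converges to φ = (√5 − 1)/2 as n → ∞. -/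
def ladderLT (n : ℕ) (p q : Fin n) : Prop := (p : ℕ) + 2 ≤ (q : ℕ)

open Equiv

/-- validity of a linear extension listing of the ladder poset -/
def LadderValid (n : ℕ) (l : Perm (Fin n)) : Prop :=
  ∀ i j : Fin n, ladderLT n (l i) (l j) → i < j

lemma decomposeFin_fst {n : ℕ} (l : Perm (Fin (n + 1))) :
    (Equiv.Perm.decomposeFin l).1 = l 0 := by
  rcases h : Equiv.Perm.decomposeFin l with ⟨p, e⟩
  have hl : l = Equiv.Perm.decomposeFin.symm (p, e) := by
    rw [← h, Equiv.symm_apply_apply]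
  rw [hl, Equiv.Perm.decomposeFin_symm_apply_zero]

lemma decomposeFin_snd_succ {n : ℕ} (l : Perm (Fin (n + 1))) (x : Fin n) :
    l x.succ = Equiv.swap 0 (l 0) (((Equiv.Perm.decomposeFin l).2 x).succ) := by
  conv_lhs => rw [← Equiv.symm_apply_apply Equiv.Perm.decomposeFin l]
  rw [show Equiv.Perm.decomposeFin l =
    ((Equiv.Perm.decomposeFin l).1, (Equiv.Perm.decomposeFin l).2) from rfl,
    Equiv.Perm.decomposeFin_symm_apply_succ, decomposeFin_fst]

lemma succ_of_fix {n : ℕ} (l : Perm (Fin (n + 1))) (h0 : l 0 = 0) (x : Fin n) :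
    l x.succ = ((Equiv.Perm.decomposeFin l).2 x).succ := by
  rw [decomposeFin_snd_succ, h0, Equiv.swap_self]
  rfl

lemma decomposeFin_eq_of_fix {n : ℕ} (l : Perm (Fin (n + 1))) (h0 : l 0 = 0) :
    Equiv.Perm.decomposeFin l = (0, (Equiv.Perm.decomposeFin l).2) :=
  Prod.ext (by rw [decomposeFin_fst, h0]) rfl

lemma valid_iff_B {n : ℕ} (l : Perm (Fin (n + 1))) (h0 : l 0 = 0) :
    LadderValid (n + 1) l ↔ LadderValid n (Equiv.Perm.decomposeFin l).2 := by
  set σ := (Equiv.Perm.decomposeFin l).2 with hσ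
  have hs : ∀ x : Fin n, l x.succ = (σ x).succ := succ_of_fix l h0
  constructor
  · intro H i j hij
    have h2 : ladderLT (n + 1) (l i.succ) (l j.succ) := by
      unfold ladderLT at hij ⊢
      rw [hs, hs, Fin.val_succ, Fin.val_succ]
      omega
    exact Fin.succ_lt_succ_iff.mp (H i.succ j.succ h2)
  · intro H i j hij
    unfold ladderLT at hij
    induction i using Fin.cases with
    | zero =>
      rw [h0] at hij
      simp only [Fin.val_zero] at hij
      have hj : j ≠ 0 := by
        intro h; rw [h, h0] at hij; simp at hij
      exact Fin.pos_iff_ne_zero.mpr hj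
    | succ x =>
      rw [hs] at hij
      induction j using Fin.cases with
      | zero =>
        rw [h0] at hij
        simp [Fin.val_succ] at hij
      | succ y =>
        rw [hs] at hij
        have h3 : ladderLT n (σ x) (σ y) := by
          unfold ladderLT
          simp only [Fin.val_succ] at hij
          omega
        exact Fin.succ_lt_succ_iff.mpr (H x y h3)

def equivB (n : ℕ) :
    {l : Perm (Fin (n + 1)) // LadderValid (n + 1) l ∧ l 0 = 0} ≃
      {σ : Perm (Fin n) // LadderValid n σ} where
  toFun l := ⟨(Equiv.Perm.decomposeFin l.1).2, (valid_iff_B l.1 l.2.2).mp l.2.1⟩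
  invFun σ := ⟨Equiv.Perm.decomposeFin.symm (0, σ.1), by
    have h0 : (Equiv.Perm.decomposeFin.symm (0, σ.1)) 0 = 0 :=
      Equiv.Perm.decomposeFin_symm_apply_zero 0 σ.1
    refine ⟨(valid_iff_B _ h0).mpr ?_, h0⟩
    rw [Equiv.apply_symm_apply]
    exact σ.2⟩
  left_inv l := Subtype.ext (by
    obtain ⟨l, hv, h0⟩ := l
    dsimp only
    conv_rhs => rw [← Equiv.symm_apply_apply Equiv.Perm.decomposeFin l]
    rw [decomposeFin_eq_of_fix l h0])
  right_inv σ := Subtype.ext (by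
    dsimp only
    rw [Equiv.apply_symm_apply])

lemma valid_l0 {n : ℕ} (l : Perm (Fin (n + 2))) (hv : LadderValid (n + 2) l)
    (h0 : l 0 ≠ 0) : l 0 = 1 := by
  have hlk : l (l.symm 0) = 0 := l.apply_symm_apply 0
  have h2 : (l 0 : ℕ) < 2 := by
    by_contra h
    have hl : ladderLT (n + 2) (l (l.symm 0)) (l 0) := by
      unfold ladderLT; rw [hlk]; simp; omega
    have := hv _ 0 hl
    exact absurd this (Fin.not_lt_zero _)
  have h3 : (l 0 : ℕ) ≠ 0 := fun h => h0 (Fin.ext (by simpa using h))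
  exact Fin.ext (by rw [Fin.val_one]; omega)

lemma valid_l1 {n : ℕ} (l : Perm (Fin (n + 2))) (hv : LadderValid (n + 2) l)
    (h0 : l 0 = 1) : l 1 = 0 := by
  have hlk : l (l.symm 0) = 0 := l.apply_symm_apply 0
  have hk0 : l.symm 0 ≠ 0 := by
    intro h; rw [h, h0] at hlk
    exact absurd (congrArg Fin.val hlk) (by simp)
  have h11 : (l 1 : ℕ) < 2 := by
    by_contra h
    have hl : ladderLT (n + 2) (l (l.symm 0)) (l 1) := by
      unfold ladderLT; rw [hlk]; simp; omega
    have hlt := hv _ 1 hl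
    have : (l.symm 0 : ℕ) < 1 := by simpa [Fin.lt_def] using hlt
    exact hk0 (Fin.ext (by simp only [Fin.val_zero]; omega))
  have hne : (l 1 : ℕ) ≠ 1 := by
    intro h
    have : l 1 = l 0 := by rw [h0]; exact Fin.ext (by simpa using h)
    have := l.injective this
    exact absurd (congrArg Fin.val this) (by simp)
  exact Fin.ext (by simp only [Fin.val_zero]; omega)

lemma valid_iff_C {n : ℕ} (l : Perm (Fin (n + 2))) (σ : Perm (Fin n))
    (h0 : l 0 = 1) (h1 : l 1 = 0)
    (hs : ∀ x : Fin n, l x.succ.succ = (σ x).succ.succ) :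
    LadderValid (n + 2) l ↔ LadderValid n σ := by
  constructor
  · intro H i j hij
    have h2 : ladderLT (n + 2) (l i.succ.succ) (l j.succ.succ) := by
      unfold ladderLT at hij ⊢
      rw [hs, hs]
      simp only [Fin.val_succ]
      omega
    have := H _ _ h2
    exact Fin.succ_lt_succ_iff.mp (Fin.succ_lt_succ_iff.mp this)
  · intro H i j hij
    unfold ladderLT at hij
    have hj0 : j = 0 → (l j : ℕ) = 1 := fun h => by rw [h, h0]; simp
    have hj1 : j = 1 → (l j : ℕ) = 0 := fun h => by rw [h, h1]; simp
    induction i using Fin.cases with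
    | zero =>
      rw [h0] at hij
      simp only [Fin.val_one] at hij
      have : j ≠ 0 := by
        intro h; have := hj0 h; omega
      exact Fin.pos_iff_ne_zero.mpr this
    | succ x =>
      induction x using Fin.cases with
      | zero =>
        rw [show (0 : Fin (n+1)).succ = 1 from rfl, h1] at hij
        simp only [Fin.val_zero] at hij
        rw [Fin.lt_def]
        have hne0 : j ≠ 0 := fun h => by have := hj0 h; omega
        have hne1 : j ≠ 1 := fun h => by have := hj1 h; omega
        have : (j : ℕ) ≠ 0 := fun h => hne0 (Fin.ext (by simpa using h))
        have : (j : ℕ) ≠ 1 := fun h => hne1 (Fin.ext (by simpa using h))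
        simp only [Fin.val_succ, Fin.val_zero]
        omega
      | succ x =>
        rw [hs] at hij
        simp only [Fin.val_succ] at hij
        induction j using Fin.cases with
        | zero => rw [h0] at hij; simp at hij
        | succ y =>
          induction y using Fin.cases with
          | zero =>
            rw [show (0 : Fin (n+1)).succ = 1 from rfl, h1] at hij
            simp at hij
          | succ y =>
            rw [hs] at hij
            simp only [Fin.val_succ] at hij
            have h3 : ladderLT n (σ x) (σ y) := by unfold ladderLT; omega
            exact Fin.succ_lt_succ_iff.mpr (Fin.succ_lt_succ_iff.mpr (H x y h3))

lemma C_struct {n : ℕ} (l : Perm (Fin (n + 2))) (h0 : l 0 = 1) (h1 : l 1 = 0) :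
    (∀ x : Fin n, l x.succ.succ =
      (((Equiv.Perm.decomposeFin (Equiv.Perm.decomposeFin l).2).2) x).succ.succ) ∧
    l = Equiv.Perm.decomposeFin.symm (1, Equiv.Perm.decomposeFin.symm
      (0, (Equiv.Perm.decomposeFin (Equiv.Perm.decomposeFin l).2).2)) := by
  set l₁ := (Equiv.Perm.decomposeFin l).2 with hl₁
  have step1 : ∀ x : Fin (n + 1), l x.succ = Equiv.swap 0 1 (l₁ x).succ := by
    intro x; rw [decomposeFin_snd_succ, h0]
  have step2 : l₁ 0 = 0 := by
    have h := step1 0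
    rw [show (0 : Fin (n+1)).succ = 1 from rfl, h1] at h
    have h2 : (l₁ 0).succ = Equiv.swap (0 : Fin (n+2)) 1 0 := by
      rw [← Equiv.swap_apply_self (0 : Fin (n+2)) 1 (l₁ 0).succ, ← h]
    rw [Equiv.swap_apply_left] at h2
    have : (l₁ 0).succ = (0 : Fin (n+1)).succ := h2
    exact Fin.succ_injective _ this
  set σ := (Equiv.Perm.decomposeFin l₁).2 with hσ
  have step3 : ∀ y : Fin n, l₁ y.succ = (σ y).succ := succ_of_fix l₁ step2
  have vals : ∀ x : Fin n, l x.succ.succ = (σ x).succ.succ := by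
    intro x
    rw [step1, step3]
    apply Equiv.swap_apply_of_ne_of_ne
    · exact Fin.succ_ne_zero _
    · intro h
      have : (σ x).succ = (0 : Fin (n+1)) := Fin.succ_injective _ h
      exact Fin.succ_ne_zero _ this
  refine ⟨vals, ?_⟩
  have e1 : Equiv.Perm.decomposeFin l = (1, l₁) :=
    Prod.ext (by rw [decomposeFin_fst, h0]) rfl
  have e2 : l₁ = Equiv.Perm.decomposeFin.symm (0, σ) := by
    conv_lhs => rw [← Equiv.symm_apply_apply Equiv.Perm.decomposeFin l₁,
      decomposeFin_eq_of_fix l₁ step2]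
  calc l = Equiv.Perm.decomposeFin.symm (Equiv.Perm.decomposeFin l) :=
        (Equiv.symm_apply_apply _ _).symm
    _ = _ := by rw [e1, e2]

def equivC (n : ℕ) :
    {l : Perm (Fin (n + 2)) // LadderValid (n + 2) l ∧ ¬ l 0 = 0} ≃
      {σ : Perm (Fin n) // LadderValid n σ} where
  toFun l := ⟨(Equiv.Perm.decomposeFin (Equiv.Perm.decomposeFin l.1).2).2, by
    have h0 := valid_l0 l.1 l.2.1 l.2.2
    have h1 := valid_l1 l.1 l.2.1 h0
    exact (valid_iff_C l.1 _ h0 h1 (C_struct l.1 h0 h1).1).mp l.2.1⟩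
  invFun σ := by
    refine ⟨Equiv.Perm.decomposeFin.symm (1, Equiv.Perm.decomposeFin.symm (0, σ.1)), ?_, ?_⟩
    · have h0 : (Equiv.Perm.decomposeFin.symm (1, Equiv.Perm.decomposeFin.symm (0, σ.1))) 0
          = 1 := Equiv.Perm.decomposeFin_symm_apply_zero _ _
      have h1 : (Equiv.Perm.decomposeFin.symm (1, Equiv.Perm.decomposeFin.symm (0, σ.1))) 1
          = 0 := by
        rw [Equiv.Perm.decomposeFin_symm_apply_one,
          Equiv.Perm.decomposeFin_symm_apply_zero]
        rw [show ((0 : Fin (n+1)).succ) = 1 from rfl, Equiv.swap_apply_right]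
      refine (valid_iff_C _ σ.1 h0 h1 ?_).mpr σ.2
      intro x
      simp only [Equiv.Perm.decomposeFin_symm_apply_succ, Equiv.swap_self,
        Equiv.refl_apply]
      apply Equiv.swap_apply_of_ne_of_ne
      · exact Fin.succ_ne_zero _
      · intro h
        exact Fin.succ_ne_zero _ (Fin.succ_injective _ h)
    · rw [Equiv.Perm.decomposeFin_symm_apply_zero]
      intro h
      exact absurd (congrArg Fin.val h) (by simp)
  left_inv l := Subtype.ext (by
    obtain ⟨l, hv, hne⟩ := l
    have h0 := valid_l0 l hv hne
    have h1 := valid_l1 l hv h0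
    exact ((C_struct l h0 h1).2).symm)
  right_inv σ := Subtype.ext (by
    dsimp only
    rw [Equiv.apply_symm_apply]
    show (Equiv.Perm.decomposeFin (Equiv.Perm.decomposeFin.symm (0, σ.1))).2 = σ.1
    rw [Equiv.apply_symm_apply])

noncomputable def ladderCount (n : ℕ) : ℕ :=
  Nat.card {σ : Perm (Fin n) // LadderValid n σ}

lemma card_split {α : Type*} [Finite α] (P Q : α → Prop) :
    Nat.card {x // P x} = Nat.card {x // P x ∧ Q x} + Nat.card {x // P x ∧ ¬ Q x} := by
  classical
  rw [← Nat.card_sum]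
  exact (Nat.card_congr (((Equiv.subtypeSubtypeEquivSubtypeInter P Q).symm.sumCongr
    (Equiv.subtypeSubtypeEquivSubtypeInter P fun x => ¬ Q x).symm).trans
    (Equiv.sumCompl fun x : {x // P x} => Q x.1))).symm

lemma ladderCount_zero : ladderCount 0 = 1 := by
  have h : ∀ σ : Perm (Fin 0), LadderValid 0 σ := fun σ i _ _ => i.elim0
  unfold ladderCount
  rw [Nat.card_congr (Equiv.subtypeUnivEquiv h)]
  simp [Nat.card_eq_fintype_card]

lemma ladderCount_one : ladderCount 1 = 1 := by
  have h : ∀ σ : Perm (Fin 1), LadderValid 1 σ := by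
    intro σ i j hij
    have := (σ j).isLt
    unfold ladderLT at hij
    omega
  unfold ladderCount
  rw [Nat.card_congr (Equiv.subtypeUnivEquiv h)]
  simp [Nat.card_eq_fintype_card]

lemma cardB (n : ℕ) :
    Nat.card {l : Perm (Fin (n + 1)) // LadderValid (n + 1) l ∧ l 0 = 0} =
      ladderCount n :=
  Nat.card_congr (equivB n)

lemma ladderCount_rec (n : ℕ) :
    ladderCount (n + 2) = ladderCount (n + 1) + ladderCount n := by
  unfold ladderCount
  rw [card_split (LadderValid (n + 2)) (fun l => l 0 = 0)]
  rw [show Nat.card {l : Perm (Fin (n + 2)) // LadderValid (n + 2) l ∧ l 0 = 0} =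
    ladderCount (n + 1) from cardB (n + 1)]
  rw [Nat.card_congr (equivC n)]
  rfl

lemma ladderCount_eq (n : ℕ) : ladderCount n = Nat.fib (n + 1) := by
  induction n using Nat.twoStepInduction with
  | zero => exact ladderCount_zero
  | one => exact ladderCount_one
  | more n ih1 ih2 =>
    rw [ladderCount_rec, ih1, ih2]
    show Nat.fib (n + 1 + 1) + Nat.fib (n + 1) = Nat.fib (n + 1 + 2)
    rw [Nat.fib_add_two (n := n + 1)]
    omega

open goldenRatio Real Filter in
lemma fib_ratio_tendsto :
    Filter.Tendsto (fun n : ℕ => (Nat.fib n : ℝ) / Nat.fib (n + 1)) Filter.atTop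
      (nhds ((Real.sqrt 5 - 1) / 2)) := by
  have h5 : (0:ℝ) < √5 := Real.sqrt_pos.mpr (by norm_num)
  have h5' : √5 ≠ 0 := ne_of_gt h5
  have hsq : √5 * √5 = 5 := Real.mul_self_sqrt (by norm_num)
  have hφ : (0:ℝ) < φ := goldenRatio_pos
  have hφ' : (φ : ℝ) ≠ 0 := goldenRatio_ne_zero
  set r : ℝ := ψ / φ with hr
  have habs : |r| < 1 := by
    rw [hr, abs_div, abs_of_pos hφ, div_lt_one hφ]
    have h1 : |ψ| < 1 := abs_lt.mpr ⟨neg_one_lt_goldenConj, by linarith [goldenConj_neg]⟩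
    linarith [one_lt_goldenRatio]
  have hrt : Filter.Tendsto (fun n : ℕ => r ^ n) atTop (nhds 0) :=
    tendsto_pow_atTop_nhds_zero_iff.mpr habs
  have key : ∀ n : ℕ,
      (Nat.fib n : ℝ) / Nat.fib (n + 1) = (1 - r ^ n) / (φ - ψ * r ^ n) := by
    intro n
    have hfibpos : (0:ℝ) < Nat.fib (n+1) := by
      exact_mod_cast Nat.fib_pos.mpr (Nat.succ_pos n)
    have hden : φ - ψ * r ^ n = √5 * (Nat.fib (n+1) : ℝ) / φ ^ n := by
      rw [Real.coe_fib_eq]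
      have gen : ∀ a b s : ℝ, a ≠ 0 → s ≠ 0 →
          a - b * (b / a) ^ n = s * ((a ^ (n+1) - b ^ (n+1)) / s) / a ^ n := by
        intro a b s ha hs; rw [div_pow]; field_simp; ring
      exact gen φ ψ √5 hφ' h5'
    have hdne : φ - ψ * r ^ n ≠ 0 := by
      rw [hden]
      exact ne_of_gt (div_pos (mul_pos h5 hfibpos) (pow_pos hφ n))
    rw [div_eq_div_iff (ne_of_gt hfibpos) hdne,
      Real.coe_fib_eq n, Real.coe_fib_eq (n+1), hr, div_pow]
    have gen : ∀ a b s : ℝ, a ≠ 0 → s ≠ 0 →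
        (a ^ n - b ^ n) / s * (a - b * (b / a) ^ n) =
          (1 - (b / a) ^ n) * ((a ^ (n+1) - b ^ (n+1)) / s) := by
      intro a b s ha hs; rw [div_pow]; field_simp; ring
    rw [← div_pow]
    exact gen φ ψ √5 hφ' h5'
  rw [show (fun n : ℕ => (Nat.fib n : ℝ) / Nat.fib (n + 1)) =
    fun n => (1 - r ^ n) / (φ - ψ * r ^ n) from funext key]
  have hlim : Filter.Tendsto (fun n : ℕ => (1 - r ^ n) / (φ - ψ * r ^ n)) atTop
      (nhds ((1 - 0) / (φ - ψ * 0))) := by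
    apply Filter.Tendsto.div
    · exact tendsto_const_nhds.sub hrt
    · exact tendsto_const_nhds.sub (hrt.const_mul ψ)
    · simpa using hφ'
  convert hlim using 2
  rw [mul_zero, sub_zero, sub_zero, eq_div_iff hφ']
  show (√5 - 1) / 2 * ((1 + √5) / 2) = 1
  nlinarith [hsq]

/-- For the ladder poset on `n ≥ 1` elements: the number of linear extensions with
bottom element `a_1` equals `F_{n-1} = Nat.fib n`, and the proportion
`F_{n-1}/F_n = Nat.fib n / Nat.fib (n+1)` converges to `φ = (√5 - 1)/2`. -/
theorem stmt6 :
    (∀ n : ℕ, ∀ hn : 1 ≤ n,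
      Nat.card {l : Equiv.Perm (Fin n) //
        (∀ i j : Fin n, ladderLT n (l i) (l j) → i < j) ∧
          l ⟨0, by omega⟩ = ⟨0, by omega⟩} = Nat.fib n) ∧
    Filter.Tendsto (fun n : ℕ => (Nat.fib n : ℝ) / Nat.fib (n + 1)) Filter.atTop
      (nhds ((Real.sqrt 5 - 1) / 2)) := by
  constructor
  · intro n hn
    obtain ⟨m, rfl⟩ : ∃ m, n = m + 1 := ⟨n - 1, by omega⟩
    have hmk : (⟨0, by omega⟩ : Fin (m + 1)) = 0 := by
      apply Fin.ext; simp
    have hcong : ∀ l : Perm (Fin (m + 1)),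
        ((∀ i j : Fin (m + 1), ladderLT (m + 1) (l i) (l j) → i < j) ∧
          l ⟨0, by omega⟩ = ⟨0, by omega⟩) ↔ (LadderValid (m + 1) l ∧ l 0 = 0) := by
      intro l
      rw [hmk]
      exact Iff.rfl
    rw [Nat.card_congr (Equiv.subtypeEquivRight hcong), cardB m, ladderCount_eq]
  · exact fib_ratio_tendsto
end

section
/- Let T = (Z,<) be a downward-branching forest (every element has exactly one upper cover is not required; rather, for each x, the up-set U[x] is a chain), let C: x_0 < x_1 < ⋯ be a maximal chain, and for i ≥ 1 set B_i = D(x_i), A_i = D(x_i) ∖ D[x_{i-1}], a_i = |A_i|, b_i = |B_i|, t_i = a_i/b_i. Then in a uniformly random linear extension of the finite poset T restricted to D[x_j], the probability that x_0 is the bottom element equals the product over i = 1,...,j of (1 − t_i). -/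
/-- A linear extension of the restriction of a poset to a set `S`, as a list: the list is
duplicate-free, its entries are exactly the elements of `S`, and no earlier entry lies
strictly above a later one. -/
def IsLinExtOn {Z : Type*} [PartialOrder Z] (S : Set Z) (l : List Z) : Prop :=
  l.Nodup ∧ (∀ z : Z, z ∈ l ↔ z ∈ S) ∧ l.Pairwise fun a b => ¬ b < a

namespace LinExtAux


/-- Interleave two lists according to a boolean mask. -/
def interleave {α : Type*} : List Bool → List α → List α → List α
  | true :: m, a :: la, lb => a :: interleave m la lb
  | false :: m, la, b :: lb => b :: interleave m la lb
  | _, _, _ => []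

lemma count_true_add_count_false (m : List Bool) :
    m.count true + m.count false = m.length := by
  induction m with
  | nil => simp
  | cons c t ih =>
    cases c <;>
      simp only [List.count_cons, List.length_cons, if_pos, beq_self_eq_true, beq_iff_eq,
        reduceCtorEq, if_false, ← ih] <;> omega

lemma interleave_spec {α : Type*} (p : α → Bool) :
    ∀ (m : List Bool) (la lb : List α), m.count true = la.length →
      m.count false = lb.length → (∀ z ∈ la, p z = true) → (∀ z ∈ lb, p z = false) →
      (interleave m la lb).map p = m ∧ (interleave m la lb).filter p = la ∧
        (interleave m la lb).filter (fun z => !(p z)) = lb := by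
  intro m
  induction m with
  | nil =>
    intro la lb h1 h2 _ _
    simp at h1 h2
    simp [List.length_eq_zero_iff.1 h1.symm, List.length_eq_zero_iff.1 h2.symm, interleave]
  | cons c t ih =>
    intro la lb h1 h2 hla hlb
    cases c with
    | true =>
      simp only [List.count_cons, beq_self_eq_true, beq_iff_eq, reduceCtorEq, if_true, if_false,
        add_zero] at h1 h2
      match la, h1 with
      | a :: la', h1 =>
        have ha := hla a (by simp)
        simp only [List.length_cons] at h1
        obtain ⟨e1, e2, e3⟩ := ih la' lb (by omega) h2 (fun z hz => hla z (by simp [hz])) hlb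
        refine ⟨?_, ?_, ?_⟩ <;> simp [interleave, e1, e2, e3, ha]
    | false =>
      simp only [List.count_cons, beq_self_eq_true, beq_iff_eq, reduceCtorEq, if_true, if_false,
        add_zero] at h1 h2
      match lb, h2 with
      | b :: lb', h2 =>
        have hb := hlb b (by simp)
        simp only [List.length_cons] at h2
        obtain ⟨e1, e2, e3⟩ := ih la lb' h1 (by omega) hla (fun z hz => hlb z (by simp [hz]))
        refine ⟨?_, ?_, ?_⟩ <;> simp [interleave, e1, e2, e3, hb]

lemma interleave_roundtrip {α : Type*} (p : α → Bool) (l : List α) :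
    interleave (l.map p) (l.filter p) (l.filter (fun z => !(p z))) = l := by
  induction l with
  | nil => rfl
  | cons a t ih =>
    cases h : p a <;> simp [h, interleave, ih]

lemma pairwise_of_filter {α : Type*} (R : α → α → Prop) (p : α → Bool) (l : List α)
    (hcross : ∀ a ∈ l, ∀ b ∈ l, p a ≠ p b → R a b)
    (h1 : (l.filter p).Pairwise R) (h2 : (l.filter (fun z => !(p z))).Pairwise R) :
    l.Pairwise R := by
  induction l with
  | nil => exact List.Pairwise.nil
  | cons c t ih =>
    have hc : ∀ d ∈ t, R c d := by
      intro d hd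
      by_cases hpd : p d = p c
      · cases hpc : p c with
        | true =>
          rw [hpc] at hpd
          rw [List.filter_cons_of_pos (by simp [hpc])] at h1
          exact (List.pairwise_cons.1 h1).1 d (List.mem_filter.2 ⟨hd, hpd⟩)
        | false =>
          rw [hpc] at hpd
          rw [List.filter_cons_of_pos (by simp [hpc])] at h2
          exact (List.pairwise_cons.1 h2).1 d (by simp [List.mem_filter, hd, hpd])
      · exact hcross c (by simp) d (by simp [hd]) (Ne.symm hpd)
    refine List.pairwise_cons.2 ⟨hc, ih ?_ ?_ ?_⟩
    · exact fun a ha b hb => hcross a (by simp [ha]) b (by simp [hb])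
    · cases hpc : p c with
      | true => rw [List.filter_cons_of_pos (by simp [hpc])] at h1; exact h1.tail
      | false => rwa [List.filter_cons_of_neg (by simp [hpc])] at h1
    · cases hpc : p c with
      | true => rwa [List.filter_cons_of_neg (by simp [hpc])] at h2
      | false => rw [List.filter_cons_of_pos (by simp [hpc])] at h2; exact h2.tail



abbrev maskType (n a : ℕ) : Type := {m : List Bool // m.length = n ∧ m.count true = a}

instance maskFinite (n a : ℕ) : Finite (maskType n a) := by
  apply Finite.of_injective (fun m : maskType n a => (fun i : Fin n => m.val.getD i false))
  rintro ⟨m, hm1, hm2⟩ ⟨m', hm1', hm2'⟩ h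
  simp only [Subtype.mk.injEq]
  apply List.ext_getElem (by rw [hm1, hm1'])
  intro i h1 h2
  have := congrFun h ⟨i, by omega⟩
  simpa [List.getD_eq_getElem?_getD, List.getElem?_eq_getElem, h1, h2] using this

lemma card_maskType (n a : ℕ) : Nat.card (maskType n a) = n.choose a := by
  induction n generalizing a with
  | zero =>
    cases a with
    | zero =>
      rw [Nat.choose_zero_right, Nat.card_eq_one_iff_exists]
      exact ⟨⟨[], by simp⟩, by rintro ⟨m, hm1, hm2⟩; simp [List.length_eq_zero_iff.1 hm1]⟩
    | succ a =>
      have : IsEmpty (maskType 0 (a+1)) := by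
        constructor
        rintro ⟨m, hm1, hm2⟩
        rw [List.length_eq_zero_iff.1 hm1] at hm2
        simp at hm2
      rw [Nat.choose_eq_zero_of_lt (by omega), Nat.card_of_isEmpty]
  | succ n ih =>
    cases a with
    | zero =>
      rw [Nat.choose_zero_right, Nat.card_eq_one_iff_exists]
      refine ⟨⟨List.replicate (n+1) false, by simp, by simp [List.count_replicate]⟩, ?_⟩
      rintro ⟨m, hm1, hm2⟩
      have : ∀ b ∈ m, b = false := by
        intro b hb
        cases b
        · rfl
        · exact absurd (List.count_eq_zero.1 hm2 hb) (by simp)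
      exact Subtype.ext (by rw [List.eq_replicate_iff]; exact ⟨hm1, this⟩)
    | succ a =>
      have hg : Function.Bijective
          (fun u : maskType n a ⊕ maskType n (a+1) => (Sum.elim
            (fun t : maskType n a => (⟨true :: t.val, by simp [t.2.1, t.2.2]⟩ : maskType (n+1) (a+1)))
            (fun t : maskType n (a+1) => ⟨false :: t.val, by simp [t.2.1, t.2.2]⟩) u)) := by
        constructor
        · rintro (⟨t, ht⟩ | ⟨t, ht⟩) (⟨s, hs⟩ | ⟨s, hs⟩) h <;>
            simp_all [Subtype.ext_iff]
        · rintro ⟨m, hm1, hm2⟩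
          match m with
          | true :: t =>
            refine ⟨Sum.inl ⟨t, by simp at hm1; exact hm1, ?_⟩, rfl⟩
            simp [List.count_cons] at hm2; omega
          | false :: t =>
            refine ⟨Sum.inr ⟨t, by simp at hm1; exact hm1, ?_⟩, rfl⟩
            simp [List.count_cons] at hm2; omega
      rw [← Nat.card_congr (Equiv.ofBijective _ hg), Nat.card_sum, ih, ih,
        Nat.choose_succ_succ]



variable {Z : Type*} [PartialOrder Z]

lemma linext_length {S : Set Z} {l : List Z} (h : IsLinExtOn S l) : l.length = S.ncard := by
  classical
  obtain ⟨hnd, hmem, -⟩ := h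
  have hS : S = ↑l.toFinset := by ext z; simp [← hmem]
  rw [hS, Set.ncard_coe_finset, List.toFinset_card_of_nodup hnd]

lemma linext_filter {A B : Set Z} {l : List Z} (p : Z → Bool)
    (h : IsLinExtOn (A ∪ B) l) (hA : ∀ z ∈ A, p z = true) (hB : ∀ z ∈ B, p z = false) :
    IsLinExtOn A (l.filter p) := by
  obtain ⟨hnd, hmem, hpw⟩ := h
  refine ⟨hnd.filter p, ?_, List.Pairwise.sublist List.filter_sublist hpw⟩
  intro z
  rw [List.mem_filter, hmem]
  constructor
  · rintro ⟨hz | hz, hp⟩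
    · exact hz
    · rw [hB z hz] at hp; simp at hp
  · exact fun hz => ⟨Or.inl hz, hA z hz⟩

lemma card_linext_head (S : Set Z) (m : Z) (hm : m ∈ S) (hmin : ∀ z ∈ S, ¬ z < m) :
    Nat.card {l : List Z // IsLinExtOn S l ∧ l.head? = some m} =
      Nat.card {l : List Z // IsLinExtOn (S \ {m}) l} := by
  refine (Nat.card_congr (Equiv.ofBijective
    (fun t : {l : List Z // IsLinExtOn (S \ {m}) l} =>
      (⟨m :: t.val, ?_, rfl⟩ : {l : List Z // IsLinExtOn S l ∧ l.head? = some m})) ⟨?_, ?_⟩)).symm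
  · obtain ⟨t, hnd, hmem, hpw⟩ := t
    have hmt : m ∉ t := fun hc => by simpa using (hmem m).1 hc
    refine ⟨List.nodup_cons.2 ⟨hmt, hnd⟩, ?_, List.pairwise_cons.2 ⟨?_, hpw⟩⟩
    · intro z
      simp only [List.mem_cons, hmem, Set.mem_diff, Set.mem_singleton_iff]
      constructor
      · rintro (rfl | ⟨hz, -⟩) <;> [exact hm; exact hz]
      · intro hz
        by_cases hzm : z = m
        · exact Or.inl hzm
        · exact Or.inr ⟨hz, hzm⟩
    · intro z hz
      exact hmin z (((hmem z).1 hz).1)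
  · rintro ⟨t, ht⟩ ⟨s, hs⟩ h
    simpa [Subtype.ext_iff] using h
  · rintro ⟨l, hl, hhead⟩
    match l, hhead with
    | a :: t, hhead =>
      simp only [List.head?_cons, Option.some.injEq] at hhead
      subst hhead
      obtain ⟨hnd, hmem, hpw⟩ := hl
      have hmt : a ∉ t := (List.nodup_cons.1 hnd).1
      refine ⟨⟨t, (List.nodup_cons.1 hnd).2, ?_, hpw.of_cons⟩, rfl⟩
      intro z
      simp only [Set.mem_diff, Set.mem_singleton_iff]
      constructor
      · intro hz
        exact ⟨(hmem z).1 (List.mem_cons_of_mem _ hz), fun hc => hmt (hc ▸ hz)⟩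
      · rintro ⟨hz, hzm⟩
        rcases List.mem_cons.1 ((hmem z).2 hz) with rfl | hz'
        · exact absurd rfl hzm
        · exact hz'

lemma card_linext_insert_top (S : Set Z) (m : Z) (h : ∀ z ∈ S, z < m) :
    Nat.card {l : List Z // IsLinExtOn (insert m S) l} =
      Nat.card {l : List Z // IsLinExtOn S l} := by
  have hmS : m ∉ S := fun hc => absurd (h m hc) (lt_irrefl m)
  refine (Nat.card_congr (Equiv.ofBijective
    (fun t : {l : List Z // IsLinExtOn S l} =>
      (⟨t.val ++ [m], ?_⟩ : {l : List Z // IsLinExtOn (insert m S) l})) ⟨?_, ?_⟩)).symm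
  · obtain ⟨t, hnd, hmem, hpw⟩ := t
    have hmt : m ∉ t := fun hc => hmS ((hmem m).1 hc)
    refine ⟨List.nodup_append.2 ⟨hnd, List.nodup_singleton m, ?_⟩, ?_, ?_⟩
    · intro z hz b hz'
      rcases List.mem_singleton.1 hz' with rfl
      exact fun hc => hmt (by rw [← hc]; exact hz)
    · intro z
      simp only [List.mem_append, List.mem_singleton, hmem, Set.mem_insert_iff]
      tauto
    · refine List.pairwise_append.2 ⟨hpw, List.pairwise_singleton _ m, ?_⟩
      intro a ha b hb
      rcases List.mem_singleton.1 hb with rfl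
      exact fun hc => absurd (h a ((hmem a).1 ha)) (asymm hc)
  · rintro ⟨t, ht⟩ ⟨s, hs⟩ hts
    simp only [Subtype.mk.injEq] at hts ⊢
    have := congrArg List.dropLast hts
    simpa [List.dropLast_concat] using this
  · rintro ⟨l, hnd, hmem, hpw⟩
    have hml : m ∈ l := (hmem m).2 (Set.mem_insert m S)
    obtain ⟨l₁, l₂, rfl⟩ := List.append_of_mem hml
    have hpw' := List.pairwise_append.1 hpw
    have hnd' := List.nodup_append.1 hnd
    have hl₂ : l₂ = [] := by
      rw [List.eq_nil_iff_forall_not_mem]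
      intro z hz
      have hzl : z ∈ l₁ ++ m :: l₂ := by simp [hz]
      have hzm : z ≠ m := by
        rintro rfl
        exact (List.nodup_cons.1 hnd'.2.1).1 hz
      have hzS : z ∈ S := by
        rcases (hmem z).1 hzl with h' | h'
        · exact absurd h' hzm
        · exact h'
      exact (List.pairwise_cons.1 hpw'.2.1).1 z hz (h z hzS)
    subst hl₂
    refine ⟨⟨l₁, hnd'.1, ?_, hpw'.1⟩, rfl⟩
    · intro z
      constructor
      · intro hz
        have hzm : z ≠ m := fun hc => hnd'.2.2 z hz m (by simp) hc
        rcases (hmem z).1 (by simp [hz]) with h' | h'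
        · exact absurd h' hzm
        · exact h'
      · intro hz
        have : z ∈ l₁ ++ [m] := (hmem z).2 (Set.mem_insert_of_mem m hz)
        rcases List.mem_append.1 this with h' | h'
        · exact h'
        · rcases List.mem_singleton.1 h' with rfl
          exact absurd hz hmS


lemma count_true_map_eq {Z : Type*} (p : Z → Bool) (l : List Z) :
    (l.map p).count true = (l.filter p).length := by
  induction l with
  | nil => rfl
  | cons a t ih => cases h : p a <;> simp [h, List.count_cons, ih]

lemma card_linext_union {Z : Type*} [PartialOrder Z] (A B : Set Z) (hA : A.Finite)
    (hB : B.Finite) (hsep : ∀ a ∈ A, ∀ b ∈ B, ¬ a < b ∧ ¬ b < a ∧ a ≠ b) :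
    Nat.card {l : List Z // IsLinExtOn (A ∪ B) l} =
      (A.ncard + B.ncard).choose A.ncard * Nat.card {la : List Z // IsLinExtOn A la} *
        Nat.card {lb : List Z // IsLinExtOn B lb} := by
  classical
  set p : Z → Bool := fun z => decide (z ∈ A) with hp
  have hpA : ∀ z ∈ A, p z = true := fun z hz => by simp [hp, hz]
  have hpB : ∀ z ∈ B, p z = false := fun z hz => by
    simp only [hp, decide_eq_false_iff_not]
    exact fun hc => (hsep z hc z hz).2.2 rfl
  have hdisj : Disjoint A B := Set.disjoint_left.2 fun z hzA hzB => (hsep z hzA z hzB).2.2 rfl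
  have hcard : (A ∪ B).ncard = A.ncard + B.ncard := Set.ncard_union_eq hdisj hA hB
  have main : ∀ (m : List Bool) (la lb : List Z), m.length = A.ncard + B.ncard →
      m.count true = A.ncard → IsLinExtOn A la → IsLinExtOn B lb →
      IsLinExtOn (A ∪ B) (interleave m la lb) ∧ (interleave m la lb).map p = m ∧
        (interleave m la lb).filter p = la ∧
        (interleave m la lb).filter (fun z => !(p z)) = lb := by
    intro m la lb hmlen hmct hla hlb
    have hlaA : ∀ z ∈ la, p z = true := fun z hz => hpA z ((hla.2.1 z).1 hz)
    have hlbB : ∀ z ∈ lb, p z = false := fun z hz => hpB z ((hlb.2.1 z).1 hz)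
    have hct : m.count true = la.length := by rw [hmct, linext_length hla]
    have hcf : m.count false = lb.length := by
      have := count_true_add_count_false m
      have hlb' := linext_length hlb
      omega
    obtain ⟨e1, e2, e3⟩ := interleave_spec p m la lb hct hcf hlaA hlbB
    set il := interleave m la lb with hil
    have hmemla : ∀ z, z ∈ il → p z = true → z ∈ A := by
      intro z hz hpz
      exact (hla.2.1 z).1 (e2 ▸ List.mem_filter.2 ⟨hz, hpz⟩)
    have hmemlb : ∀ z, z ∈ il → p z = false → z ∈ B := by
      intro z hz hpz
      exact (hlb.2.1 z).1 (e3 ▸ List.mem_filter.2 ⟨hz, by simp [hpz]⟩)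
    refine ⟨⟨?_, ?_, ?_⟩, e1, e2, e3⟩
    · rw [List.nodup_iff_count_le_one]
      intro z
      cases hpz : p z with
      | true =>
        have : il.count z = la.count z := by
          rw [← e2]; exact (List.count_filter hpz).symm
        rw [this]
        exact List.nodup_iff_count_le_one.1 hla.1 z
      | false =>
        have : il.count z = lb.count z := by
          rw [← e3]; exact (List.count_filter (by simp [hpz])).symm
        rw [this]
        exact List.nodup_iff_count_le_one.1 hlb.1 z
    · intro z
      constructor
      · intro hz
        cases hpz : p z with
        | true => exact Or.inl (hmemla z hz hpz)
        | false => exact Or.inr (hmemlb z hz hpz)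
      · rintro (hz | hz)
        · exact List.mem_of_mem_filter (e2 ▸ (hla.2.1 z).2 hz)
        · exact List.mem_of_mem_filter (e3 ▸ (hlb.2.1 z).2 hz)
    · refine pairwise_of_filter _ p il ?_ (by rw [e2]; exact hla.2.2) (by rw [e3]; exact hlb.2.2)
      intro a ha b hb hab
      cases hpa : p a with
      | true =>
        have hpb : p b = false := by cases hpb : p b; rfl; exact absurd (hpa.trans hpb.symm) hab
        exact (hsep a (hmemla a ha hpa) b (hmemlb b hb hpb)).2.1
      | false =>
        have hpb : p b = true := by cases hpb : p b; exact absurd (hpa.trans hpb.symm) hab; rfl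
        exact (hsep b (hmemla b hb hpb) a (hmemlb a ha hpa)).1
  have hf : Function.Bijective (fun u : maskType (A.ncard + B.ncard) A.ncard ×
      {la : List Z // IsLinExtOn A la} × {lb : List Z // IsLinExtOn B lb} =>
      (⟨interleave u.1.val u.2.1.val u.2.2.val,
        (main u.1.val u.2.1.val u.2.2.val u.1.2.1 u.1.2.2 u.2.1.2 u.2.2.2).1⟩ :
        {l : List Z // IsLinExtOn (A ∪ B) l})) := by
    constructor
    · rintro ⟨⟨m, hm⟩, ⟨la, hla⟩, ⟨lb, hlb⟩⟩ ⟨⟨m', hm'⟩, ⟨la', hla'⟩, ⟨lb', hlb'⟩⟩ h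
      simp only [Subtype.mk.injEq] at h
      obtain ⟨e1, e2, e3⟩ := (main m la lb hm.1 hm.2 hla hlb).2
      obtain ⟨f1, f2, f3⟩ := (main m' la' lb' hm'.1 hm'.2 hla' hlb').2
      rw [h] at e1 e2 e3
      simp only [Prod.mk.injEq, Subtype.mk.injEq]
      exact ⟨e1.symm.trans f1, e2.symm.trans f2, e3.symm.trans f3⟩
    · rintro ⟨l, hl⟩
      have hla : IsLinExtOn A (l.filter p) := linext_filter p hl hpA hpB
      have hlb : IsLinExtOn B (l.filter (fun z => !(p z))) := by
        refine linext_filter (B := A) (fun z => !(p z)) ?_ ?_ ?_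
        · rwa [Set.union_comm]
        · intro z hz; simp [hpB z hz]
        · intro z hz; simp [hpA z hz]
      have hm1 : (l.map p).length = A.ncard + B.ncard := by
        rw [List.length_map, linext_length hl, hcard]
      have hm2 : (l.map p).count true = A.ncard := by
        rw [count_true_map_eq, linext_length hla]
      refine ⟨⟨⟨l.map p, hm1, hm2⟩, ⟨l.filter p, hla⟩, ⟨l.filter _, hlb⟩⟩, ?_⟩
      exact Subtype.ext (interleave_roundtrip p l)
  rw [← Nat.card_congr (Equiv.ofBijective _ hf), Nat.card_prod, Nat.card_prod, card_maskType,
    mul_assoc]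

lemma card_linext_empty {Z : Type*} [PartialOrder Z] :
    Nat.card {l : List Z // IsLinExtOn (∅ : Set Z) l} = 1 := by
  rw [Nat.card_eq_one_iff_exists]
  refine ⟨⟨[], List.nodup_nil, by simp, List.Pairwise.nil⟩, ?_⟩
  rintro ⟨l, hnd, hmem, hpw⟩
  have : l = [] := List.eq_nil_iff_forall_not_mem.2 fun z hz => by simpa using (hmem z).1 hz
  simp [this]

end LinExtAux

open LinExtAux in
/-- For a downward-branching tree `T` (a causal set where every up-set `U[x]` is a chain
and every two elements have a common upper bound), with maximal chain
`C : x 0 < x 1 < ⋯` starting at a minimal element `x 0` (so `U[x 0] = range x`), the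
probability that `x 0` is the bottom element of a uniformly random linear extension of the
restriction of `T` to `D[x j]` equals `∏_{i=1}^{j} (1 - t_i)`, where
`t_i = |A_i| / |B_i|`, `B_i = D(x i)` and `A_i = D(x i) \ D[x (i-1)]`. -/
theorem stmt9 (Z : Type*) [PartialOrder Z] [Countable Z] [Infinite Z]
    (hD : ∀ z : Z, {y : Z | y < z}.Finite)
    (hforest : ∀ a : Z, IsChain (· ≤ ·) {y : Z | a ≤ y})
    (htree : ∀ a b : Z, ∃ c : Z, a ≤ c ∧ b ≤ c)
    (x : ℕ → Z) (hmono : StrictMono x) (hmin : ∀ y : Z, ¬ y < x 0)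
    (hmax : {y : Z | x 0 ≤ y} = Set.range x) (j : ℕ) :
    (Nat.card {l : List Z // IsLinExtOn {y : Z | y ≤ x j} l ∧ l.head? = some (x 0)} : ℝ) =
      (∏ i ∈ Finset.Icc 1 j,
        (1 - ({y : Z | y < x i ∧ ¬ y ≤ x (i - 1)}.ncard : ℝ) / {y : Z | y < x i}.ncard)) *
        Nat.card {l : List Z // IsLinExtOn {y : Z | y ≤ x j} l} := by
  have hx0le : ∀ i, x 0 ≤ x i := fun i => hmono.monotone (Nat.zero_le i)
  have hSins : ∀ i, {y : Z | y ≤ x i} = insert (x i) {y : Z | y < x i} := by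
    intro i
    ext y
    simp only [Set.mem_setOf_eq, Set.mem_insert_iff]
    rw [le_iff_lt_or_eq]
    tauto
  have hfinL : ∀ i, {y : Z | y < x i}.Finite := fun i => hD (x i)
  have hfinS : ∀ i, {y : Z | y ≤ x i}.Finite := fun i => by
    rw [hSins i]; exact (hfinL i).insert _
  have hheadcard : ∀ i, Nat.card {l : List Z // IsLinExtOn {y : Z | y ≤ x i} l ∧
      l.head? = some (x 0)} = Nat.card {l : List Z // IsLinExtOn ({y : Z | y ≤ x i} \ {x 0}) l} :=
    fun i => card_linext_head _ (x 0) (hx0le i) (fun z _ => hmin z)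
  induction j with
  | zero =>
    rw [Finset.Icc_eq_empty (by omega), Finset.prod_empty, one_mul, hheadcard 0]
    have h1 : {y : Z | y ≤ x 0} \ {x 0} = (∅ : Set Z) := by
      ext y
      simp only [Set.mem_diff, Set.mem_setOf_eq, Set.mem_singleton_iff, Set.mem_empty_iff_false,
        iff_false, not_and, not_not]
      intro hy
      exact ((le_iff_lt_or_eq.1 hy).resolve_left (hmin y))
    have h2 : {y : Z | y < x 0} = (∅ : Set Z) := by
      ext y; simpa using hmin y
    rw [h1, card_linext_empty, hSins 0, h2,
      card_linext_insert_top (∅ : Set Z) (x 0) (by simp), card_linext_empty]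
  | succ j ih =>
    set Aset : Set Z := {y : Z | y < x (j + 1) ∧ ¬ y ≤ x j} with hAset
    set sS : Set Z := {y : Z | y ≤ x j} with hsS
    have hfinA : Aset.Finite := (hfinL (j+1)).subset fun y hy => hy.1
    have hxj1 : x j < x (j + 1) := hmono (by omega)
    have hsep : ∀ p ∈ Aset, ∀ q ∈ sS, ¬ p < q ∧ ¬ q < p ∧ p ≠ q := by
      intro p hp q hq
      obtain ⟨hp1, hp2⟩ := hp
      have hpq : ¬ p ≤ q := fun hc => hp2 (hc.trans hq)
      refine ⟨fun hc => hpq hc.le, ?_, fun hc => hpq (hc ▸ le_refl p)⟩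
      intro hqp
      have hchain := hforest q
      have hpmem : p ∈ {y : Z | q ≤ y} := hqp.le
      have hxjmem : x j ∈ {y : Z | q ≤ y} := hq
      have hpnej : p ≠ x j := fun hc => hp2 (hc ▸ le_refl p)
      rcases hchain hpmem hxjmem hpnej with hc | hc
      · exact hp2 hc
      · have hx0p : x 0 ≤ p := (hx0le j).trans hc
        have : p ∈ Set.range x := hmax ▸ hx0p
        obtain ⟨k, rfl⟩ := this
        have hk1 : j ≤ k := hmono.le_iff_le.1 hc
        have hk2 : k < j + 1 := hmono.lt_iff_lt.1 hp1
        have : k = j := by omega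
        exact hpnej (by rw [this])
    have hdisj : Disjoint Aset sS :=
      Set.disjoint_left.2 fun z hzA hzS => (hsep z hzA z hzS).2.2 rfl
    have hLsplit : {y : Z | y < x (j + 1)} = Aset ∪ sS := by
      ext y
      simp only [Set.mem_setOf_eq, Set.mem_union, hAset, hsS]
      constructor
      · intro hy
        by_cases hyle : y ≤ x j
        · exact Or.inr hyle
        · exact Or.inl ⟨hy, hyle⟩
      · rintro (⟨hy, -⟩ | hy)
        · exact hy
        · exact lt_of_le_of_lt hy hxj1
    have hx0S : x 0 ∈ sS := hx0le j
    have hx0A : x 0 ∉ Aset := fun hc => hc.2 (hx0le j)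
    have hLsplit0 : {y : Z | y < x (j + 1)} \ {x 0} = Aset ∪ (sS \ {x 0}) := by
      rw [hLsplit, Set.union_diff_distrib, Set.diff_singleton_eq_self hx0A]
    -- notation for cardinalities
    set a := Aset.ncard with ha
    set s := sS.ncard with hs
    have hc1 : (sS \ {x 0}).ncard + 1 = s := Set.ncard_diff_singleton_add_one hx0S (hfinS j)
    set c := (sS \ {x 0}).ncard with hcc
    have hb : {y : Z | y < x (j + 1)}.ncard = a + s := by
      rw [hLsplit, Set.ncard_union_eq hdisj hfinA (hfinS j)]
    -- f and g recursions
    have hS1 : {y : Z | y ≤ x (j + 1)} \ {x 0} =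
        insert (x (j + 1)) ({y : Z | y < x (j + 1)} \ {x 0}) := by
      ext y
      simp only [Set.mem_diff, Set.mem_setOf_eq, Set.mem_singleton_iff, Set.mem_insert_iff]
      constructor
      · rintro ⟨hy, hy0⟩
        rcases le_iff_lt_or_eq.1 hy with h | h
        · exact Or.inr ⟨h, hy0⟩
        · exact Or.inl h
      · rintro (rfl | ⟨hy, hy0⟩)
        · refine ⟨le_refl _, fun hc => ?_⟩
          have := hmono (show 0 < j + 1 by omega)
          rw [hc] at this
          exact lt_irrefl _ this
        · exact ⟨hy.le, hy0⟩
    have hgrec : Nat.card {l : List Z // IsLinExtOn ({y : Z | y ≤ x (j + 1)} \ {x 0}) l} =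
        (a + c).choose a * Nat.card {la : List Z // IsLinExtOn Aset la} *
          Nat.card {lb : List Z // IsLinExtOn (sS \ {x 0}) lb} := by
      rw [hS1, card_linext_insert_top _ _ (fun z hz => hz.1), hLsplit0]
      exact card_linext_union Aset (sS \ {x 0}) hfinA ((hfinS j).diff)
        (fun p hp q hq => hsep p hp q hq.1)
    have hfrec : Nat.card {l : List Z // IsLinExtOn {y : Z | y ≤ x (j + 1)} l} =
        (a + s).choose a * Nat.card {la : List Z // IsLinExtOn Aset la} *
          Nat.card {lb : List Z // IsLinExtOn sS lb} := by
      rw [hSins (j + 1),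
        card_linext_insert_top {y : Z | y < x (j + 1)} (x (j + 1)) (fun z hz => hz), hLsplit]
      exact card_linext_union Aset sS hfinA (hfinS j) hsep
    -- the binomial identity
    have hs1 : s = c + 1 := by omega
    have hnat : (a + c + 1) * (a + c).choose a = ((a + c + 1).choose a) * (c + 1) := by
      have h1 : (a + c).choose a = (a + c).choose c := Nat.choose_symm_add
      have h2 : (a + c + 1).choose (c + 1) = (a + c + 1).choose a :=
        Nat.choose_symm_of_eq_add (by omega)
      rw [h1, ← h2]
      exact Nat.add_one_mul_choose_eq (a + c) c
    -- assemble
    rw [Finset.prod_Icc_succ_top (by omega)]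
    simp only [Nat.add_sub_cancel]
    rw [hheadcard (j + 1), hgrec, hfrec]
    have hden : ((a : ℝ) + (c : ℝ) + 1) ≠ 0 := by positivity
    have hterm : (1 - (({y : Z | y < x (j+1) ∧ ¬ y ≤ x j}.ncard : ℝ) /
        ({y : Z | y < x (j+1)}.ncard : ℝ))) = ((c : ℝ) + 1) / ((a : ℝ) + (c : ℝ) + 1) := by
      have e1 : {y : Z | y < x (j+1) ∧ ¬ y ≤ x j}.ncard = a := rfl
      have e2 : (({y : Z | y < x (j+1)}.ncard : ℕ) : ℝ) = (a : ℝ) + (c : ℝ) + 1 := by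
        rw [hb, hs1]; push_cast; ring
      rw [e1, e2, eq_div_iff hden, sub_mul, one_mul, div_mul_cancel₀ _ hden]
      ring
    rw [hterm]
    have hchoose : ((a + c).choose a : ℝ) = ((c : ℝ) + 1) / ((a : ℝ) + (c : ℝ) + 1) *
        ((a + s).choose a : ℝ) := by
      rw [div_mul_eq_mul_div, eq_div_iff hden, hs1, ← Nat.add_assoc]
      have hcast : (((a + c + 1) * (a + c).choose a : ℕ) : ℝ) =
          (((a + c + 1).choose a * (c + 1) : ℕ) : ℝ) := by exact_mod_cast hnat
      push_cast at hcast ⊢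
      linear_combination hcast
    rw [hheadcard j, ← hsS] at ih
    push_cast at ih ⊢
    rw [hchoose, ih]
    ring
end

section
/- Let P = (Z,<) be a causal set such that I(x) is finite for every x ∈ Z. Then P has no proper infinite down-set: every infinite down-set of P equals Z. -/
/-- If `P` is a causal set in which every element is incomparable with only finitely many
others, then every infinite down-set of `P` equals all of `P`. -/
theorem stmt12 (Z : Type*) [PartialOrder Z] [Countable Z] [Infinite Z]
    (hD : ∀ z : Z, {y : Z | y < z}.Finite)
    (hI : ∀ x : Z, {y : Z | ¬ x ≤ y ∧ ¬ y ≤ x}.Finite) :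
    ∀ Y : Set Z, IsLowerSet Y → Y.Infinite → Y = Set.univ := by
  intro Y hY hinf
  ext x
  simp only [Set.mem_univ, iff_true]
  have hfin : {y : Z | ¬ x ≤ y}.Finite := by
    apply ((hD x).union (hI x)).subset
    intro y hy
    simp only [Set.mem_setOf_eq] at hy ⊢
    by_cases h : y ≤ x
    · exact Or.inl (lt_of_le_of_ne h (fun he => hy (he ▸ le_refl x)))
    · exact Or.inr ⟨hy, h⟩
  obtain ⟨y, hyY, hy⟩ := (hinf.diff hfin).nonempty
  simp only [Set.mem_setOf_eq, not_not] at hy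
  exact hY hy hyY
end

section
/- Let P = (Z,<) be a causal set such that for every finite down-set A, the poset P ∖ A has only finitely many minimal elements. Then the space Ω^P of infinite sequences x_1 x_2 ⋯ of distinct elements of Z, in which each x_k is a minimal element of P ∖ {x_1,...,x_{k−1}}, equipped with the metric d(x_1x_2⋯, y_1y_2⋯) = ∑_i 2^{−i} 𝟙(x_i ≠ y_i), is compact (equivalently sequentially compact). -/
open scoped Classical

/-- Membership in `Ω^P`: an injective sequence in which each entry is minimal among the
elements not yet listed (everything strictly below an entry appears earlier). -/
def MemOmegaP {Z : Type*} [PartialOrder Z] (ω : ℕ → Z) : Prop :=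
  Function.Injective ω ∧ ∀ k : ℕ, ∀ y : Z, y < ω k → ∃ j < k, ω j = y

/-- The metric `d(x, y) = ∑_{i≥1} 2^{-i} 𝟙(x_i ≠ y_i)` on sequences (0-indexed). -/
noncomputable def seqDist {Z : Type*} (ω ω' : ℕ → Z) : ℝ :=
  ∑' i : ℕ, (2 : ℝ)⁻¹ ^ (i + 1) * (if ω i = ω' i then 0 else 1)

section Aux
variable {Z : Type*} [PartialOrder Z]

inductive LegalList : List Z → Prop
  | nil : LegalList []
  | cons (b : Z) (l : List Z) : LegalList l → b ∉ l → (∀ y ∉ l, ¬ y < b) →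
      LegalList (b :: l)

lemma LegalList.lower {l : List Z} (h : LegalList l) : IsLowerSet {z | z ∈ l} := by
  induction h with
  | nil => intro a b _ ha; simp at ha
  | cons b l hl hb hm ih =>
      intro a c hle ha
      simp only [Set.mem_setOf_eq, List.mem_cons] at ha ⊢
      rcases ha with rfl | ha
      · rcases eq_or_lt_of_le hle with rfl | hlt
        · exact Or.inl rfl
        · right; by_contra hc; exact hm c hc hlt
      · exact Or.inr (ih hle ha)

lemma legal_finite
    (hmin : ∀ A : Set Z, IsLowerSet A → A.Finite →
      {b : Z | b ∉ A ∧ ∀ y ∉ A, ¬ y < b}.Finite) :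
    ∀ k : ℕ, {l : List Z | LegalList l ∧ l.length = k}.Finite := by
  intro k
  induction k with
  | zero =>
      refine (Set.finite_singleton ([] : List Z)).subset ?_
      rintro l ⟨-, hlen⟩
      simpa using List.length_eq_zero_iff.mp hlen
  | succ k ih =>
      refine (Set.Finite.biUnion ih (fun l hl =>
        ((hmin {z | z ∈ l} hl.1.lower l.finite_toSet).image (fun b => b :: l)))).subset ?_
      rintro l' ⟨hleg, hlen⟩
      cases hleg with
      | nil => simp at hlen
      | cons b l hl hb hm =>
          refine Set.mem_biUnion (s := {l : List Z | LegalList l ∧ l.length = k})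
            ⟨hl, by simpa using hlen⟩ ?_
          exact ⟨b, ⟨hb, hm⟩, rfl⟩

def prefList (ω : ℕ → Z) : ℕ → List Z
  | 0 => []
  | k + 1 => ω k :: prefList ω k

lemma mem_prefList {ω : ℕ → Z} {k : ℕ} {y : Z} :
    y ∈ prefList ω k ↔ ∃ j < k, ω j = y := by
  induction k with
  | zero => simp [prefList]
  | succ k ih =>
      simp only [prefList, List.mem_cons, ih]
      constructor
      · rintro (rfl | ⟨j, hj, rfl⟩)
        · exact ⟨k, Nat.lt_succ_self k, rfl⟩
        · exact ⟨j, hj.trans (Nat.lt_succ_self k), rfl⟩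
      · rintro ⟨j, hj, rfl⟩
        rcases Nat.lt_succ_iff_lt_or_eq.mp hj with h | rfl
        · exact Or.inr ⟨j, h, rfl⟩
        · exact Or.inl rfl

lemma prefList_length (ω : ℕ → Z) (k : ℕ) : (prefList ω k).length = k := by
  induction k with
  | zero => rfl
  | succ k ih => simp [prefList, ih]

lemma prefList_legal {ω : ℕ → Z} (hω : MemOmegaP ω) (k : ℕ) :
    LegalList (prefList ω k) := by
  induction k with
  | zero => exact LegalList.nil
  | succ k ih =>
      refine LegalList.cons _ _ ih ?_ ?_
      · intro hmem
        rcases mem_prefList.mp hmem with ⟨j, hj, hje⟩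
        have := hω.1 hje
        omega
      · intro y hy hlt
        rcases hω.2 k y hlt with ⟨j, hj, rfl⟩
        exact hy (mem_prefList.mpr ⟨j, hj, rfl⟩)

def coordSet (k : ℕ) : Set Z := {b : Z | ∃ l : List Z, LegalList (b :: l) ∧ l.length = k}

lemma coordSet_finite
    (hmin : ∀ A : Set Z, IsLowerSet A → A.Finite →
      {b : Z | b ∉ A ∧ ∀ y ∉ A, ¬ y < b}.Finite) (k : ℕ) :
    (coordSet (Z := Z) k).Finite := by
  refine Set.Finite.of_finite_image (f := Option.some) ?_ (Option.some_injective Z).injOn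
  refine ((legal_finite hmin (k + 1)).image List.head?).subset ?_
  rintro _ ⟨b, ⟨l, hleg, hlen⟩, rfl⟩
  exact ⟨b :: l, ⟨hleg, by simp [hlen]⟩, rfl⟩

lemma mem_coordSet {ω : ℕ → Z} (hω : MemOmegaP ω) (k : ℕ) : ω k ∈ coordSet k :=
  ⟨prefList ω k, prefList_legal hω (k + 1), prefList_length ω k⟩

end Aux

lemma seqDist_summable {Z : Type*} (a b : ℕ → Z) :
    Summable (fun i : ℕ => (2 : ℝ)⁻¹ ^ (i + 1) * (if a i = b i then 0 else 1)) := by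
  refine Summable.of_nonneg_of_le (fun i => ?_) (fun i => ?_)
    ((summable_geometric_of_lt_one (r := (2:ℝ)⁻¹) (by norm_num) (by norm_num)).mul_right ((2:ℝ)⁻¹))
  · positivity
  · rw [pow_succ]
    split <;> simp <;> positivity

lemma seqDist_nonneg {Z : Type*} (a b : ℕ → Z) : 0 ≤ seqDist a b :=
  tsum_nonneg (fun i => by positivity)

lemma seqDist_le {Z : Type*} (a b : ℕ → Z) (m : ℕ) (h : ∀ i < m, a i = b i) :
    seqDist a b ≤ (2 : ℝ)⁻¹ ^ m := by
  have hsum := seqDist_summable a b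
  rw [seqDist, ← Summable.sum_add_tsum_nat_add m hsum]
  have h1 : (∑ i ∈ Finset.range m, (2 : ℝ)⁻¹ ^ (i + 1) * (if a i = b i then 0 else 1)) = 0 := by
    refine Finset.sum_eq_zero (fun i hi => ?_)
    rw [if_pos (h i (Finset.mem_range.mp hi)), mul_zero]
  rw [h1, zero_add]
  have h2 : ∀ i : ℕ, (2 : ℝ)⁻¹ ^ (i + m + 1) * (if a (i + m) = b (i + m) then 0 else 1)
      ≤ (2 : ℝ)⁻¹ ^ (i + 1) * (2 : ℝ)⁻¹ ^ m := by
    intro i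
    rw [← pow_add]
    have : i + 1 + m = i + m + 1 := by ring
    rw [this]
    split <;> simp <;> positivity
  calc (∑' i : ℕ, (2 : ℝ)⁻¹ ^ (i + m + 1) * (if a (i + m) = b (i + m) then 0 else 1))
      ≤ ∑' i : ℕ, (2 : ℝ)⁻¹ ^ (i + 1) * (2 : ℝ)⁻¹ ^ m := by
        refine Summable.tsum_le_tsum h2 (hsum.comp_injective (add_left_injective m)) ?_
        exact ((summable_geometric_of_lt_one (r := (2:ℝ)⁻¹) (by norm_num) (by norm_num)).mul_right
          ((2:ℝ)⁻¹)).mul_right _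
    _ = (2 : ℝ)⁻¹ ^ m := by
        rw [tsum_mul_right]
        have : (∑' i : ℕ, (2 : ℝ)⁻¹ ^ (i + 1)) = 1 := by
          have := tsum_geometric_of_lt_one (r := (2:ℝ)⁻¹) (by norm_num) (by norm_num)
          calc (∑' i : ℕ, (2 : ℝ)⁻¹ ^ (i + 1))
              = ∑' i : ℕ, (2:ℝ)⁻¹ ^ i * (2:ℝ)⁻¹ := by
                refine tsum_congr (fun i => ?_); rw [pow_succ]
            _ = 1 := by rw [tsum_mul_right, this]; norm_num
        rw [this, one_mul]

/-- If `P` is a causal set such that `P ∖ A` has finitely many minimal elements for every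
finite down-set `A`, then `Ω^P` is sequentially compact for the metric `seqDist`: every
sequence in `Ω^P` has a subsequence converging to an element of `Ω^P`. -/
theorem stmt15 (Z : Type*) [PartialOrder Z] [Countable Z] [Infinite Z]
    (hD : ∀ z : Z, {y : Z | y < z}.Finite)
    (hmin : ∀ A : Set Z, IsLowerSet A → A.Finite →
      {b : Z | b ∉ A ∧ ∀ y ∉ A, ¬ y < b}.Finite)
    (u : ℕ → {ω : ℕ → Z // MemOmegaP ω}) :
    ∃ ω : {ω : ℕ → Z // MemOmegaP ω}, ∃ φ : ℕ → ℕ, StrictMono φ ∧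
      Filter.Tendsto (fun n => seqDist ((u (φ n)) : ℕ → Z) (ω : ℕ → Z))
        Filter.atTop (nhds 0) := by
  classical
  letI : TopologicalSpace Z := ⊥
  haveI : DiscreteTopology Z := ⟨rfl⟩
  set K : Set (ℕ → Z) := Set.univ.pi (fun k => coordSet (Z := Z) k) with hKdef
  have hK : IsCompact K :=
    isCompact_univ_pi (fun k => (coordSet_finite hmin k).isCompact)
  have hu : ∀ n, (u n : ℕ → Z) ∈ K := by
    intro n
    rw [hKdef, Set.mem_univ_pi]
    exact fun k => mem_coordSet (u n).2 k
  obtain ⟨ω, hωK, φ, hφ, hconv⟩ := hK.tendsto_subseq hu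
  have hcoord : ∀ k : ℕ, ∀ᶠ n in Filter.atTop, (u (φ n) : ℕ → Z) k = ω k := by
    intro k
    have h1 : Filter.Tendsto (fun n => (u (φ n) : ℕ → Z) k) Filter.atTop (nhds (ω k)) :=
      (tendsto_pi_nhds.1 hconv) k
    rw [nhds_discrete] at h1
    exact Filter.tendsto_pure.1 h1
  have hblock : ∀ m : ℕ, ∀ᶠ n in Filter.atTop, ∀ i < m, (u (φ n) : ℕ → Z) i = ω i := by
    intro m
    have := (Filter.eventually_all_finset (Finset.range m) (l := Filter.atTop)
      (p := fun i n => (u (φ n) : ℕ → Z) i = ω i)).2 (fun i _ => hcoord i)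
    filter_upwards [this] with n hn i hi
    exact hn i (Finset.mem_range.mpr hi)
  have hmem : MemOmegaP ω := by
    constructor
    · intro i j hij
      obtain ⟨n, hn⟩ := ((hcoord i).and (hcoord j)).exists
      exact (u (φ n)).2.1 (by rw [hn.1, hn.2, hij])
    · intro k y hy
      obtain ⟨n, hn⟩ := (hblock (k + 1)).exists
      have hk : (u (φ n) : ℕ → Z) k = ω k := hn k (Nat.lt_succ_self k)
      obtain ⟨j, hj, hje⟩ := (u (φ n)).2.2 k y (by rw [hk]; exact hy)
      exact ⟨j, hj, by rw [← hn j (hj.trans (Nat.lt_succ_self k)), hje]⟩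
  refine ⟨⟨ω, hmem⟩, φ, hφ, ?_⟩
  rw [NormedAddCommGroup.tendsto_nhds_zero]
  intro ε hε
  obtain ⟨m, hm⟩ := exists_pow_lt_of_lt_one hε (by norm_num : (2:ℝ)⁻¹ < 1)
  filter_upwards [hblock m] with n hn
  rw [Real.norm_eq_abs, abs_of_nonneg (seqDist_nonneg _ _)]
  exact lt_of_le_of_lt (seqDist_le _ _ m hn) hm
end

section
/- Let P = (Z,<) be an upward-branching forest with no maximal element (for every x there exists y > x), with a nonempty countable set of minimal elements. Then there exists a function f: Z → (0,∞) such that f(x) = ∑_{y covering x} f(y) for every x ∈ Z, and the sum of f(x) over all minimal elements x equals 1. -/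
/-- Any nonempty countable type carries a strictly positive weight function summing to 1. -/
lemma aux_weight18 (α : Type*) [Countable α] [Nonempty α] :
    ∃ w : α → ℝ, (∀ a, 0 < w a) ∧ HasSum w 1 := by
  obtain ⟨g, hg⟩ := exists_surjective_nat α
  have hs : HasSum (fun n : ℕ => ((1:ℝ)/2)^(n+1)) 1 := by
    have h := (hasSum_geometric_of_lt_one (by norm_num : (0:ℝ) ≤ 1/2)
      (by norm_num : (1:ℝ)/2 < 1)).mul_left ((1:ℝ)/2)
    convert h using 2 with n
    · rfl
    · rw [pow_succ]; ring
    · norm_num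
  refine ⟨fun a => ∑' n : g ⁻¹' {a}, ((1:ℝ)/2)^((n:ℕ)+1), ?_, ?_⟩
  · intro a
    obtain ⟨n, hn⟩ := hg a
    have : Nonempty (g ⁻¹' {a}) := ⟨⟨n, hn⟩⟩
    exact Summable.tsum_pos (hs.summable.subtype _) (fun i => by positivity) ⟨n, hn⟩
      (by positivity)
  · exact hs.tsum_fiberwise g

/-- In an upward-branching forest (a countable poset in which every `D[x]` is a finite
chain) with no maximal element and a nonempty set of minimal elements, there is a flow of
value `1`: a strictly positive function `f` with `f(x) = ∑_{y ⋖-covering x} f(y)` for all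
`x`, whose sum over the minimal elements is `1`. -/
theorem stmt18 (Z : Type*) [PartialOrder Z] [Countable Z]
    (hfin : ∀ x : Z, {y : Z | y ≤ x}.Finite)
    (hchain : ∀ x : Z, IsChain (· ≤ ·) {y : Z | y ≤ x})
    (hnomax : ∀ x : Z, ∃ y : Z, x < y)
    (hmin : {x : Z | ∀ y : Z, ¬ y < x}.Nonempty) :
    ∃ f : Z → ℝ, (∀ x : Z, 0 < f x) ∧
      (∀ x : Z, HasSum (fun y : {y : Z // x ⋖ y} => f y) (f x)) ∧
      HasSum (fun x : {x : Z // ∀ y : Z, ¬ y < x} => f x) 1 := by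
  classical
  -- every element has an upper cover
  have hcov : ∀ x : Z, ∃ y : Z, x ⋖ y := by
    intro x
    obtain ⟨y, hxy⟩ := hnomax x
    set S : Finset Z := (hfin y).toFinset.filter (fun z => x < z) with hS
    have hyS : y ∈ S := by
      simp [hS, Set.Finite.mem_toFinset, hxy]
    obtain ⟨m, hmS, hmmin⟩ : ∃ m ∈ S, ∀ x ∈ S, ¬ x < m := by
      obtain ⟨m, hm⟩ := Finset.exists_minimal ⟨y, hyS⟩
      exact ⟨m, hm.1, fun x hx hxm => not_lt_of_ge (hm.2 hx hxm.le) hxm⟩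
    have hm : m ≤ y ∧ x < m := by
      simpa [hS, Set.Finite.mem_toFinset] using hmS
    refine ⟨m, hm.2, fun c hxc hcm => ?_⟩
    exact hmmin c (by simp [hS, Set.Finite.mem_toFinset]; exact ⟨hcm.le.trans hm.1, hxc⟩) hcm
  -- every non-minimal element has a lower cover
  have hlow : ∀ y : Z, (∃ z : Z, z < y) → ∃ x : Z, x ⋖ y := by
    intro y ⟨z, hz⟩
    set S : Finset Z := (hfin y).toFinset.filter (fun w => w < y) with hS
    have hzS : z ∈ S := by simp [hS, Set.Finite.mem_toFinset, hz, hz.le]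
    obtain ⟨m, hmS, hmmax⟩ : ∃ m ∈ S, ∀ x ∈ S, ¬ m < x := by
      obtain ⟨m, hm⟩ := Finset.exists_maximal ⟨z, hzS⟩
      exact ⟨m, hm.1, fun x hx hmx => not_lt_of_ge (hm.2 hx hmx.le) hmx⟩
    have hm : m < y := by
      simpa [hS, Set.Finite.mem_toFinset] using (Finset.mem_filter.mp hmS).2
    refine ⟨m, hm, fun c hmc hcy => ?_⟩
    exact hmmax c (by simp [hS, Set.Finite.mem_toFinset]; exact ⟨hcy.le, hcy⟩) hmc
  -- lower covers are unique
  have huniq : ∀ {x x' y : Z}, x ⋖ y → x' ⋖ y → x = x' := by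
    intro x x' y h h'
    by_contra hne
    rcases (hchain y) (show x ∈ {z | z ≤ y} from h.1.le) (show x' ∈ {z | z ≤ y} from h'.1.le)
      hne with hle | hle
    · exact h.2 (lt_of_le_of_ne hle hne) h'.1
    · exact h'.2 (lt_of_le_of_ne hle (Ne.symm hne)) h.1
  -- weights on children
  have hW : ∀ x : Z, ∃ w : {y : Z // x ⋖ y} → ℝ, (∀ a, 0 < w a) ∧ HasSum w 1 := by
    intro x
    have : Nonempty {y : Z // x ⋖ y} := by
      obtain ⟨y, hy⟩ := hcov x
      exact ⟨⟨y, hy⟩⟩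
    exact aux_weight18 _
  choose w hwpos hwsum using hW
  -- weights on minimal elements
  have : Nonempty {x : Z // ∀ y : Z, ¬ y < x} := ⟨⟨hmin.choose, hmin.choose_spec⟩⟩
  obtain ⟨wm, hwmpos, hwmsum⟩ := aux_weight18 {x : Z // ∀ y : Z, ¬ y < x}
  -- step weight
  set s : Z → ℝ := fun y =>
    if h : ∃ x : Z, x ⋖ y then w (Classical.choose h) ⟨y, Classical.choose_spec h⟩
    else wm ⟨y, fun z hz => h ⟨(hlow y ⟨z, hz⟩).choose, (hlow y ⟨z, hz⟩).choose_spec⟩⟩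
    with hsdef
  have hspos : ∀ y : Z, 0 < s y := by
    intro y
    rw [hsdef]
    dsimp only
    split
    · exact hwpos _ _
    · exact hwmpos _
  -- s at a covered element
  have hscov : ∀ {x y : Z} (h : x ⋖ y), s y = w x ⟨y, h⟩ := by
    intro x y h
    rw [hsdef]
    dsimp only
    rw [dif_pos ⟨x, h⟩]
    have key : ∀ (x' : Z) (h' : x' ⋖ y), x' = x → w x' ⟨y, h'⟩ = w x ⟨y, h⟩ := by
      rintro x' h' rfl; rfl
    exact key _ (Classical.choose_spec (⟨x, h⟩ : ∃ x : Z, x ⋖ y))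
      (huniq (Classical.choose_spec (⟨x, h⟩ : ∃ x : Z, x ⋖ y)) h)
  -- s at a minimal element
  have hsmin : ∀ {y : Z} (h : ∀ z : Z, ¬ z < y), s y = wm ⟨y, h⟩ := by
    intro y h
    have hno : ¬ ∃ x : Z, x ⋖ y := fun ⟨x, hx⟩ => h x hx.1
    rw [hsdef]
    dsimp only
    rw [dif_neg hno]
  -- the flow
  set f : Z → ℝ := fun y => ∏ z ∈ (hfin y).toFinset, s z with hfdef
  have hfpos : ∀ y : Z, 0 < f y :=
    fun y => Finset.prod_pos (fun z _ => hspos z)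
  -- down-set of a minimal element
  have hDmin : ∀ {y : Z}, (∀ z : Z, ¬ z < y) → (hfin y).toFinset = {y} := by
    intro y h
    ext z
    simp only [Set.Finite.mem_toFinset, Set.mem_setOf_eq, Finset.mem_singleton]
    constructor
    · intro hz
      rcases eq_or_lt_of_le hz with h' | h'
      · exact h'
      · exact absurd h' (h z)
    · rintro rfl; exact le_rfl
  -- down-set of a cover
  have hDcov : ∀ {x y : Z}, x ⋖ y → (hfin y).toFinset = insert y (hfin x).toFinset := by
    intro x y h
    ext z
    simp only [Set.Finite.mem_toFinset, Set.mem_setOf_eq, Finset.mem_insert]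
    constructor
    · intro hz
      rcases eq_or_lt_of_le hz with h' | h'
      · exact Or.inl h'
      · right
        rcases eq_or_ne z x with rfl | hne
        · exact le_rfl
        · rcases (hchain y) (show z ∈ {v | v ≤ y} from hz)
            (show x ∈ {v | v ≤ y} from h.1.le) hne with hle | hle
          · exact hle
          · exact absurd h' (h.2 (lt_of_le_of_ne hle (Ne.symm hne)))
    · rintro (rfl | hz)
      · exact le_rfl
      · exact hz.trans h.1.le
  have hfcov : ∀ {x y : Z} (h : x ⋖ y), f y = f x * w x ⟨y, h⟩ := by
    intro x y h
    have hy : y ∉ (hfin x).toFinset := by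
      simp only [Set.Finite.mem_toFinset, Set.mem_setOf_eq]
      intro hyx
      exact absurd (h.1.trans_le hyx) (lt_irrefl x)
    rw [hfdef]
    dsimp only
    rw [hDcov h, Finset.prod_insert hy, hscov h, mul_comm]
  have hfmin : ∀ {y : Z} (h : ∀ z : Z, ¬ z < y), f y = wm ⟨y, h⟩ := by
    intro y h
    rw [hfdef]
    dsimp only
    rw [hDmin h, Finset.prod_singleton, hsmin h]
  refine ⟨f, hfpos, ?_, ?_⟩
  · intro x
    have h1 : HasSum (fun c : {y : Z // x ⋖ y} => f x * w x c) (f x * 1) :=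
      (hwsum x).mul_left (f x)
    rw [mul_one] at h1
    convert h1 using 1
    funext c
    exact hfcov c.2
  · convert hwmsum using 1
    funext x
    exact hfmin x.2
end
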